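/- Let A and B be lists over a type α with decidable equality, of lengths m and n respectively. The minimum length ℓ of a directed path from (0,0) to (m,n) in the LCS grid graph G_{A,B} equals m + n − lcsLen(A,B). -/

import Mathlib

/-- `lcsLen s t` is the maximum length of a list that is a sublist
(subsequence) of both `s` and `t`. -/
def lcsLen {α : Type*} [DecidableEq α] (s t : List α) : ℕ :=
  ((s.sublists.filter (fun l => decide (l.Sublist t))).map List.length).foldr max 0

/-- Edge relation of the LCS grid graph `G_{C,B}`: horizontal, vertical,
and (on character matches) diagonal edges. -/
def GridEdge {α : Type*} (C B : List α) (u v : ℕ × ℕ) : Prop :=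
  (v = (u.1, u.2 + 1) ∧ u.1 ≤ C.length ∧ u.2 < B.length) ∨
  (v = (u.1 + 1, u.2) ∧ u.1 < C.length ∧ u.2 ≤ B.length) ∨
  (v = (u.1 + 1, u.2 + 1) ∧
    ∃ (h1 : u.1 < C.length) (h2 : u.2 < B.length), C.get ⟨u.1, h1⟩ = B.get ⟨u.2, h2⟩)

/-- `IsGridPath C B ℓ u v p` : `p` is a directed path of length `ℓ`
from `u` to `v` in the LCS grid graph `G_{C,B}`. -/
def IsGridPath {α : Type*} (C B : List α) (ℓ : ℕ) (u v : ℕ × ℕ)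
    (p : Fin (ℓ + 1) → ℕ × ℕ) : Prop :=
  p 0 = u ∧ p (Fin.last ℓ) = v ∧
    ∀ k : Fin ℓ, GridEdge C B (p k.castSucc) (p k.succ)

namespace LCSProof

variable {α : Type*}

lemma le_foldr_max {a : ℕ} {L : List ℕ} (h : a ∈ L) : a ≤ L.foldr max 0 := by
  induction L with
  | nil => simp at h
  | cons b t ih =>
    rcases List.mem_cons.1 h with rfl | h
    · exact le_max_left _ _
    · exact le_trans (ih h) (le_max_right _ _)

lemma foldr_max_mem (L : List ℕ) : L.foldr max 0 ∈ L ∨ L.foldr max 0 = 0 := by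
  induction L with
  | nil => simp
  | cons b t ih =>
    simp only [List.foldr_cons]
    rcases le_total b (t.foldr max 0) with h | h
    · rw [max_eq_right h]
      rcases ih with h' | h'
      · exact Or.inl (List.mem_cons_of_mem _ h')
      · exact Or.inr h'
    · rw [max_eq_left h]
      exact Or.inl List.mem_cons_self

lemma length_le_lcsLen [DecidableEq α] {l A B : List α} (h1 : l.Sublist A) (h2 : l.Sublist B) :
    l.length ≤ lcsLen A B := by
  apply le_foldr_max
  apply List.mem_map_of_mem
  rw [List.mem_filter]
  exact ⟨List.mem_sublists.2 h1, by simpa using h2⟩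

lemma exists_lcs [DecidableEq α] (A B : List α) :
    ∃ l : List α, l.Sublist A ∧ l.Sublist B ∧ l.length = lcsLen A B := by
  have key := foldr_max_mem ((A.sublists.filter (fun l => decide (l.Sublist B))).map List.length)
  rcases key with h | h
  · rw [List.mem_map] at h
    obtain ⟨l, hl, hlen⟩ := h
    rw [List.mem_filter] at hl
    exact ⟨l, List.mem_sublists.1 hl.1, by simpa using hl.2, hlen⟩
  · exact ⟨[], List.nil_sublist _, List.nil_sublist _, by simpa [lcsLen] using h.symm⟩

/-- A walk of length `L` in the grid graph, as a chain of vertices. -/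
def Walk (A B : List α) (u v : ℕ × ℕ) (L : ℕ) : Prop :=
  ∃ c : List (ℕ × ℕ), List.Chain' (GridEdge A B) (u :: c) ∧
    (u :: c).getLast (by simp) = v ∧ c.length = L

lemma Walk.refl (A B : List α) (u : ℕ × ℕ) : Walk A B u u 0 :=
  ⟨[], List.isChain_singleton _, by simp, rfl⟩

lemma Walk.step {A B : List α} {u u' v : ℕ × ℕ} {L : ℕ}
    (h : GridEdge A B u u') (hw : Walk A B u' v L) : Walk A B u v (L + 1) := by
  obtain ⟨c, hc, hl, hn⟩ := hw
  refine ⟨u' :: c, List.isChain_cons_cons.2 ⟨h, hc⟩, ?_, by simp [hn]⟩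
  rw [List.getLast_cons (by simp)]
  exact hl

lemma Walk.trans {A B : List α} : ∀ {L1 L2 : ℕ} {u v w : ℕ × ℕ},
    Walk A B u v L1 → Walk A B v w L2 → Walk A B u w (L1 + L2) := by
  intro L1
  induction L1 with
  | zero =>
    intro L2 u v w h1 h2
    obtain ⟨c, _, hl, hn⟩ := h1
    rw [List.length_eq_zero_iff] at hn
    subst hn
    simp at hl
    subst hl
    simpa using h2
  | succ L1 ih =>
    intro L2 u v w h1 h2
    obtain ⟨c, hc, hl, hn⟩ := h1
    cases c with
    | nil => simp at hn
    | cons u' c' =>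
      replace hc := List.isChain_cons_cons.1 hc
      rw [List.getLast_cons (by simp)] at hl
      have h1' : Walk A B u' v L1 := ⟨c', hc.2, hl, by simpa using hn⟩
      have := Walk.step hc.1 (ih h1' h2)
      have harith : L1 + L2 + 1 = L1 + 1 + L2 := by omega
      rwa [harith] at this

lemma walk_vert (A B : List α) : ∀ (a i j : ℕ), i + a ≤ A.length → j ≤ B.length →
    Walk A B (i, j) (i + a, j) a := by
  intro a
  induction a with
  | zero => intro i j _ _; simpa using Walk.refl A B (i, j)
  | succ a ih =>
    intro i j hi hj
    have e : GridEdge A B (i, j) (i + 1, j) := Or.inr (Or.inl ⟨rfl, by omega, hj⟩)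
    have w := ih (i + 1) j (by omega) hj
    have := Walk.step e w
    have harith : i + 1 + a = i + (a + 1) := by omega
    rwa [harith] at this

lemma walk_horiz (A B : List α) : ∀ (b i j : ℕ), i ≤ A.length → j + b ≤ B.length →
    Walk A B (i, j) (i, j + b) b := by
  intro b
  induction b with
  | zero => intro i j _ _; simpa using Walk.refl A B (i, j)
  | succ b ih =>
    intro i j hi hj
    have e : GridEdge A B (i, j) (i, j + 1) := Or.inl ⟨rfl, hi, by omega⟩
    have w := ih i (j + 1) hi (by omega)
    have := Walk.step e w
    have harith : j + 1 + b = j + (b + 1) := by omega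
    rwa [harith] at this

lemma getElem_concat (xs : List α) (a : α) (ys : List α) {i : ℕ} (hi : i = xs.length)
    (h : i < (xs ++ a :: ys).length) : (xs ++ a :: ys)[i] = a := by
  subst hi
  rw [List.getElem_append_right (le_refl _)]
  simp

/-- Main construction: a walk realizing a common subsequence. -/
lemma exists_walk : ∀ (l : List α), ∀ (A1 A' B1 B' : List α),
    l.Sublist A' → l.Sublist B' →
    ∃ L, Walk (A1 ++ A') (B1 ++ B') (A1.length, B1.length)
        ((A1 ++ A').length, (B1 ++ B').length) L ∧
      L + l.length = A'.length + B'.length := by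
  intro l
  induction l with
  | nil =>
    intro A1 A' B1 B' _ _
    refine ⟨A'.length + B'.length, ?_, by simp⟩
    have w1 := walk_vert (A1 ++ A') (B1 ++ B') A'.length A1.length B1.length
      (by simp) (by simp)
    have w2 := walk_horiz (A1 ++ A') (B1 ++ B') B'.length (A1.length + A'.length) B1.length
      (by simp) (by simp)
    have := w1.trans w2
    simpa using this
  | cons a l ih =>
    intro A1 A' B1 B' h1 h2
    obtain ⟨r1, r2, hA', ha, hl⟩ := List.cons_sublist_iff.1 h1
    obtain ⟨s, t, hst⟩ := List.append_of_mem ha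
    obtain ⟨r1', r2', hB', ha', hl'⟩ := List.cons_sublist_iff.1 h2
    obtain ⟨s', t', hst'⟩ := List.append_of_mem ha'
    have hA2 : A' = s ++ a :: (t ++ r2) := by rw [hA', hst]; simp
    have hB2 : B' = s' ++ a :: (t' ++ r2') := by rw [hB', hst']; simp
    clear hA' hB' ha ha' h1 h2
    subst hA2; subst hB2
    have hsubA : l.Sublist (t ++ r2) := hl.trans (List.sublist_append_right _ _)
    have hsubB : l.Sublist (t' ++ r2') := hl'.trans (List.sublist_append_right _ _)
    obtain ⟨L, wrec, hL⟩ := ih ((A1 ++ s) ++ [a]) (t ++ r2) ((B1 ++ s') ++ [a]) (t' ++ r2')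
      hsubA hsubB
    have heqA : ((A1 ++ s) ++ [a]) ++ (t ++ r2) = A1 ++ (s ++ a :: (t ++ r2)) := by simp
    have heqB : ((B1 ++ s') ++ [a]) ++ (t' ++ r2') = B1 ++ (s' ++ a :: (t' ++ r2')) := by simp
    rw [heqA, heqB] at wrec
    -- start point of wrec
    have hstart : ((A1 ++ s) ++ [a]).length = A1.length + s.length + 1 := by
      simp only [List.length_append, List.length_cons, List.length_nil] <;> omega
    have hstart' : ((B1 ++ s') ++ [a]).length = B1.length + s'.length + 1 := by
      simp only [List.length_append, List.length_cons, List.length_nil] <;> omega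
    rw [hstart, hstart'] at wrec
    -- the diagonal edge
    set A : List α := A1 ++ (s ++ a :: (t ++ r2)) with hA
    set B : List α := B1 ++ (s' ++ a :: (t' ++ r2')) with hB
    have hAeq : A = (A1 ++ s) ++ a :: (t ++ r2) := by simp [hA]
    have hBeq : B = (B1 ++ s') ++ a :: (t' ++ r2') := by simp [hB]
    have hi : A1.length + s.length < A.length := by
      simp only [hA, List.length_append, List.length_cons] <;> omega
    have hj : B1.length + s'.length < B.length := by
      simp only [hB, List.length_append, List.length_cons] <;> omega
    have hgetA : A.get ⟨A1.length + s.length, hi⟩ = a := by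
      simp only [List.get_eq_getElem]
      rw [List.getElem_of_eq hAeq]
      exact getElem_concat (A1 ++ s) a (t ++ r2) (by simp) _
    have hgetB : B.get ⟨B1.length + s'.length, hj⟩ = a := by
      simp only [List.get_eq_getElem]
      rw [List.getElem_of_eq hBeq]
      exact getElem_concat (B1 ++ s') a (t' ++ r2') (by simp) _
    have edge : GridEdge A B (A1.length + s.length, B1.length + s'.length)
        (A1.length + s.length + 1, B1.length + s'.length + 1) :=
      Or.inr (Or.inr ⟨rfl, hi, hj, by rw [hgetA, hgetB]⟩)
    have w1 := walk_vert A B s.length A1.length B1.length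
      (by simp only [hA, List.length_append, List.length_cons] <;> omega)
      (by simp only [hB, List.length_append, List.length_cons] <;> omega)
    have w2 := walk_horiz A B s'.length (A1.length + s.length) B1.length
      (by simp only [hA, List.length_append, List.length_cons] <;> omega)
      (by simp only [hB, List.length_append, List.length_cons] <;> omega)
    have wall := w1.trans (w2.trans (Walk.step edge wrec))
    refine ⟨s.length + (s'.length + (L + 1)), wall, ?_⟩
    have hL2 := hL
    simp only [List.length_append, List.length_cons] at hL2 ⊢
    omega

lemma Walk.toPath {A B : List α} {u v : ℕ × ℕ} {L : ℕ} (h : Walk A B u v L) :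
    ∃ p : Fin (L + 1) → ℕ × ℕ, IsGridPath A B L u v p := by
  obtain ⟨c, hc, hl, hn⟩ := h
  have hlen : (u :: c).length = L + 1 := by simp [hn]
  refine ⟨fun k => (u :: c).get (Fin.cast hlen.symm k), ?_, ?_, ?_⟩
  · rfl
  · rw [← hl, List.getLast_eq_getElem]
    simp only [List.get_eq_getElem]
    congr 1
    simp [hn]
  · intro k
    have := List.isChain_iff_getElem.1 hc k.val (by simp [hn] <;> omega)
    exact this

lemma telescope : ∀ {ℓ : ℕ} (S : Fin (ℓ + 1) → ℕ) (w : Fin ℓ → ℕ),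
    (∀ k, S k.succ = S k.castSucc + w k) → S (Fin.last ℓ) = S 0 + ∑ k, w k := by
  intro ℓ
  induction ℓ with
  | zero => intro S w _; simp [Fin.last]
  | succ ℓ ih =>
    intro S w h
    have h1 := ih (fun k => S k.castSucc) (fun k => w k.castSucc)
      (fun k => by have := h k.castSucc; rw [Fin.succ_castSucc] at this; exact this)
    simp only [Fin.castSucc_zero] at h1
    rw [Fin.sum_univ_castSucc, ← Fin.succ_last, h (Fin.last ℓ), h1]
    omega

lemma path_mono_fst {A B : List α} {ℓ : ℕ} {u v : ℕ × ℕ} {p : Fin (ℓ + 1) → ℕ × ℕ}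
    (h : IsGridPath A B ℓ u v p) : Monotone (fun k => (p k).1) := by
  rw [Fin.monotone_iff_le_succ]
  intro k
  rcases h.2.2 k with ⟨hv, _⟩ | ⟨hv, _⟩ | ⟨hv, _⟩ <;> simp [hv]

end LCSProof

open LCSProof in
/-- The minimum length of a directed path from `(0,0)` to `(m,n)` in the LCS
grid graph `G_{A,B}` equals `m + n - lcsLen A B`. -/
theorem shortest_grid_path_length {α : Type*} [DecidableEq α] (A B : List α) :
    IsLeast {ℓ : ℕ | ∃ p : Fin (ℓ + 1) → ℕ × ℕ,
        IsGridPath A B ℓ (0, 0) (A.length, B.length) p}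
      (A.length + B.length - lcsLen A B) := by
  classical
  obtain ⟨l0, hlA, hlB, hlen0⟩ := exists_lcs A B
  have hlcs_le : lcsLen A B ≤ A.length := hlen0 ▸ hlA.length_le
  constructor
  · -- membership: construct a path of the right length
    obtain ⟨L, w, hL⟩ := exists_walk l0 [] A [] B hlA hlB
    simp only [List.nil_append, List.length_nil] at w hL
    have hLeq : L = A.length + B.length - lcsLen A B := by omega
    rw [hLeq] at w
    exact w.toPath
  · -- lower bound
    rintro ℓ ⟨p, hp⟩
    obtain ⟨h0, hlast, hedge⟩ := hp
    set m := A.length with hm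
    set n := B.length with hn
    let Diag : Fin ℓ → Prop := fun k =>
      (p k.succ).1 = (p k.castSucc).1 + 1 ∧ (p k.succ).2 = (p k.castSucc).2 + 1
    have hstep : ∀ k, (p k.succ).1 + (p k.succ).2 =
        ((p k.castSucc).1 + (p k.castSucc).2) + (if Diag k then 2 else 1) := by
      intro k
      rcases hedge k with ⟨hv, _⟩ | ⟨hv, _⟩ | ⟨hv, _⟩ <;>
        (have hv1 := congrArg Prod.fst hv
         have hv2 := congrArg Prod.snd hv
         simp only at hv1 hv2)
      · have hnd : ¬ Diag k := fun hd => by obtain ⟨hd1, _⟩ := hd; omega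
        rw [if_neg hnd]; omega
      · have hnd : ¬ Diag k := fun hd => by obtain ⟨_, hd2⟩ := hd; omega
        rw [if_neg hnd]; omega
      · have hd : Diag k := ⟨hv1, hv2⟩
        rw [if_pos hd]; omega
    have htel := telescope (fun k => (p k).1 + (p k).2) (fun k => if Diag k then 2 else 1) hstep
    rw [h0, hlast] at htel
    set D := Finset.univ.filter Diag with hD
    have hsum : ∑ k : Fin ℓ, (if Diag k then 2 else 1) = ℓ + D.card := by
      have heach : ∀ k ∈ Finset.univ, (if Diag k then 2 else 1) = 1 + (if Diag k then 1 else 0) :=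
        fun k _ => by split <;> rfl
      rw [Finset.sum_congr rfl heach, Finset.sum_add_distrib, Finset.sum_boole]
      simp [hD]
    have hmn : m + n = ℓ + D.card := by
      rw [hsum] at htel
      simpa using htel
    set d := D.card with hd
    -- the diagonal steps give a common subsequence of length d
    have hdiagmem : ∀ k ∈ D, Diag k := fun k hk => (Finset.mem_filter.1 hk).2
    have hmatch : ∀ k : Fin ℓ, Diag k → ∃ (h1 : (p k.castSucc).1 < m) (h2 : (p k.castSucc).2 < n),
        A.get ⟨(p k.castSucc).1, h1⟩ = B.get ⟨(p k.castSucc).2, h2⟩ := by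
      intro k hk
      rcases hedge k with ⟨hv, _⟩ | ⟨hv, _⟩ | ⟨hv, hmm⟩
      · exfalso
        have hv1 := congrArg Prod.fst hv
        simp only at hv1
        obtain ⟨hk1, _⟩ := hk
        omega
      · exfalso
        have hv2 := congrArg Prod.snd hv
        simp only at hv2
        obtain ⟨_, hk2⟩ := hk
        omega
      · exact hmm
    let e := D.orderIsoOfFin (rfl : D.card = d)
    have hdiag : ∀ t : Fin d, Diag (e t : Fin ℓ) := fun t => hdiagmem _ (e t).2
    let I : Fin d → ℕ := fun t => (p ((e t : Fin ℓ)).castSucc).1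
    let J : Fin d → ℕ := fun t => (p ((e t : Fin ℓ)).castSucc).2
    have hIlt : ∀ t, I t < m := fun t => (hmatch _ (hdiag t)).choose
    have hJlt : ∀ t, J t < n := fun t => (hmatch _ (hdiag t)).choose_spec.choose
    have hget : ∀ t, A.get ⟨I t, hIlt t⟩ = B.get ⟨J t, hJlt t⟩ := fun t =>
      (hmatch _ (hdiag t)).choose_spec.choose_spec
    have hmono1 : Monotone (fun k => (p k).1) := path_mono_fst ⟨h0, hlast, hedge⟩
    have hmono2 : Monotone (fun k => (p k).2) := by
      rw [Fin.monotone_iff_le_succ]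
      intro k
      rcases hedge k with ⟨hv, _⟩ | ⟨hv, _⟩ | ⟨hv, _⟩ <;> simp [hv]
    have hklt : ∀ {t t' : Fin d}, t < t' → (e t : Fin ℓ) < (e t' : Fin ℓ) := by
      intro t t' htt
      exact_mod_cast e.strictMono htt
    have hImono : StrictMono I := by
      intro t t' htt
      have hk := hklt htt
      have hle : ((e t : Fin ℓ)).succ ≤ ((e t' : Fin ℓ)).castSucc := by
        rw [Fin.le_def]
        simp only [Fin.val_succ, Fin.coe_castSucc]
        exact hk
      have hstep1 : (p ((e t : Fin ℓ)).succ).1 = (p ((e t : Fin ℓ)).castSucc).1 + 1 :=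
        (hdiag t).1
      have hmle : (p ((e t : Fin ℓ)).succ).1 ≤ (p ((e t' : Fin ℓ)).castSucc).1 := hmono1 hle
      show (p ((e t : Fin ℓ)).castSucc).1 < (p ((e t' : Fin ℓ)).castSucc).1
      omega
    have hJmono : StrictMono J := by
      intro t t' htt
      have hk := hklt htt
      have hle : ((e t : Fin ℓ)).succ ≤ ((e t' : Fin ℓ)).castSucc := by
        rw [Fin.le_def]
        simp only [Fin.val_succ, Fin.coe_castSucc]
        exact hk
      have hstep1 : (p ((e t : Fin ℓ)).succ).2 = (p ((e t : Fin ℓ)).castSucc).2 + 1 :=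
        (hdiag t).2
      have hmle : (p ((e t : Fin ℓ)).succ).2 ≤ (p ((e t' : Fin ℓ)).castSucc).2 := hmono2 hle
      show (p ((e t : Fin ℓ)).castSucc).2 < (p ((e t' : Fin ℓ)).castSucc).2
      omega
    have hpairI : List.Pairwise (fun x1 x2 : Fin A.length => (x1 : ℕ) < x2)
        (List.ofFn (fun t : Fin d => (⟨I t, hIlt t⟩ : Fin A.length))) := by
      rw [List.pairwise_ofFn]
      intro i j hij
      exact hImono hij
    have hpairJ : List.Pairwise (fun x1 x2 : Fin B.length => (x1 : ℕ) < x2)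
        (List.ofFn (fun t : Fin d => (⟨J t, hJlt t⟩ : Fin B.length))) := by
      rw [List.pairwise_ofFn]
      intro i j hij
      exact hJmono hij
    have hsubA : (List.ofFn (fun t : Fin d => A.get ⟨I t, hIlt t⟩)).Sublist A := by
      have : (List.map A.get (List.ofFn (fun t : Fin d => (⟨I t, hIlt t⟩ : Fin A.length)))).Sublist A :=
        List.map_getElem_sublist hpairI
      rwa [List.map_ofFn] at this
    have hsubB : (List.ofFn (fun t : Fin d => A.get ⟨I t, hIlt t⟩)).Sublist B := by
      have : (List.map B.get (List.ofFn (fun t : Fin d => (⟨J t, hJlt t⟩ : Fin B.length)))).Sublist B :=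
        List.map_getElem_sublist hpairJ
      rw [List.map_ofFn] at this
      have heq : (B.get ∘ fun t : Fin d => (⟨J t, hJlt t⟩ : Fin B.length)) =
          (fun t : Fin d => A.get ⟨I t, hIlt t⟩) := funext fun t => (hget t).symm
      rwa [heq] at this
    have hlstlen : (List.ofFn (fun t : Fin d => A.get ⟨I t, hIlt t⟩)).length = d := by simp
    have hdle : d ≤ lcsLen A B := hlstlen ▸ length_le_lcsLen hsubA hsubB
    omega
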